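/- Let E ⊆ ℤ with d*(E) > 0, where d* is upper Banach density. Then there exists an invertible measure-preserving system (X, μ, T) on a probability space and a measurable set A ⊆ X with μ(A) = d*(E), such that for all n ∈ ℤ, d*(E ∩ (E + n)) ≥ μ(A ∩ T^n A); in particular the return-time set R(A) = {n : μ(A ∩ T^n A) > 0} is contained in E − E. -/

import Mathlib

open MeasureTheory

/-- Upper Banach density of a set of integers. -/
noncomputable def upperBanachDensity (E : Set ℤ) : ℝ :=
  Filter.limsup
    (fun N : ℕ => ⨆ a : ℤ, ((E ∩ Set.Ico a (a + N)).ncard : ℝ) / N)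
    Filter.atTop

namespace FCaux

open Filter Set Topology NNReal ENNReal

noncomputable section

def tA (F : Set ℤ) (N : ℕ) (a : ℤ) : ℝ := ((F ∩ Set.Ico a (a + N)).ncard : ℝ) / N

def sN (F : Set ℤ) (N : ℕ) : ℝ := ⨆ a : ℤ, tA F N a

lemma ubd_eq (F : Set ℤ) : upperBanachDensity F = Filter.limsup (sN F) Filter.atTop := rfl

lemma tA_nonneg (F : Set ℤ) (N : ℕ) (a : ℤ) : 0 ≤ tA F N a :=
  div_nonneg (Nat.cast_nonneg _) (Nat.cast_nonneg _)

lemma ncard_Ico (a : ℤ) (N : ℕ) : (Set.Ico a (a + N)).ncard = N := by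
  rw [← Finset.coe_Ico, Set.ncard_coe_finset, Int.card_Ico]
  simp

lemma tA_le_one (F : Set ℤ) (N : ℕ) (a : ℤ) : tA F N a ≤ 1 := by
  rcases Nat.eq_zero_or_pos N with h | h
  · simp [tA, h]
  · rw [tA, div_le_one (by exact_mod_cast h)]
    have : (F ∩ Set.Ico a (a + N)).ncard ≤ N := by
      calc (F ∩ Set.Ico a (a + N)).ncard
          ≤ (Set.Ico a (a + (N:ℤ))).ncard :=
            Set.ncard_le_ncard Set.inter_subset_right (Set.finite_Ico _ _)
        _ = N := ncard_Ico a N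
    exact_mod_cast this

lemma tA_bdd (F : Set ℤ) (N : ℕ) : BddAbove (Set.range (tA F N)) :=
  ⟨1, by rintro x ⟨a, rfl⟩; exact tA_le_one F N a⟩

lemma tA_le_sN (F : Set ℤ) (N : ℕ) (a : ℤ) : tA F N a ≤ sN F N :=
  le_ciSup (tA_bdd F N) a

lemma sN_nonneg (F : Set ℤ) (N : ℕ) : 0 ≤ sN F N :=
  (tA_nonneg F N 0).trans (tA_le_sN F N 0)

lemma sN_le_one (F : Set ℤ) (N : ℕ) : sN F N ≤ 1 := ciSup_le fun a => tA_le_one F N a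

lemma sN_bddAbove (F : Set ℤ) : IsBoundedUnder (· ≤ ·) atTop (sN F) :=
  Filter.isBoundedUnder_of ⟨1, fun N => sN_le_one F N⟩

lemma sN_cobdd (F : Set ℤ) : IsCoboundedUnder (· ≤ ·) atTop (sN F) := by
  have : IsBoundedUnder (· ≥ ·) atTop (sN F) :=
    Filter.isBoundedUnder_of ⟨0, fun N => sN_nonneg F N⟩
  exact this.isCoboundedUnder_le

variable (E : Set ℤ)

lemma exists_witness (k : ℕ) : ∃ N : ℕ, k + 1 ≤ N ∧ ∃ a : ℤ,
    upperBanachDensity E - 1/((k:ℝ)+1) < tA E N a := by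
  have hpos : (0:ℝ) < 1/((k:ℝ)+1) := by positivity
  have h : upperBanachDensity E - 1/((k:ℝ)+1) < limsup (sN E) atTop := by
    rw [← ubd_eq]; linarith
  have h2 := frequently_lt_of_lt_limsup (sN_cobdd E) h
  rw [frequently_atTop] at h2
  obtain ⟨N, hN, hlt⟩ := h2 (k+1)
  exact ⟨N, hN, exists_lt_of_lt_ciSup hlt⟩

def Nk (k : ℕ) : ℕ := (exists_witness E k).choose

def ak (k : ℕ) : ℤ := (exists_witness E k).choose_spec.2.choose

lemma Nk_ge (k : ℕ) : k + 1 ≤ Nk E k := (exists_witness E k).choose_spec.1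

lemma Nk_pos (k : ℕ) : 0 < Nk E k := lt_of_lt_of_le (Nat.succ_pos k) (Nk_ge E k)

lemma ak_spec (k : ℕ) :
    upperBanachDensity E - 1/((k:ℝ)+1) < tA E (Nk E k) (ak E k) :=
  (exists_witness E k).choose_spec.2.choose_spec


def XX : Type := ℤ → Bool

instance : TopologicalSpace XX := inferInstanceAs (TopologicalSpace (ℤ → Bool))
instance : CompactSpace XX := inferInstanceAs (CompactSpace (ℤ → Bool))
instance : T2Space XX := inferInstanceAs (T2Space (ℤ → Bool))
instance : MeasurableSpace XX := borel XX
instance : BorelSpace XX := ⟨rfl⟩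

/-- the shift homeomorphism -/
def shift : XX ≃ₜ XX where
  toFun x := fun n => x (n + 1)
  invFun x := fun n => x (n - 1)
  left_inv x := by funext n; simp
  right_inv x := by funext n; simp
  continuous_toFun := continuous_pi fun n => continuous_apply (n + 1)
  continuous_invFun := continuous_pi fun n => continuous_apply (n - 1)

def Tp : Equiv.Perm XX := shift.toEquiv

lemma Tp_zpow (m : ℤ) : ∀ (x : XX) (n : ℤ), (Tp ^ m) x n = x (n + m) := by
  induction m using Int.induction_on with
  | zero => intro x n; simp
  | succ k ih =>
      intro x n
      rw [zpow_add_one, Equiv.Perm.mul_apply, ih (Tp x) n]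
      show x (n + (k : ℤ) + 1) = x (n + ((k : ℤ) + 1))
      congr 1; ring
  | pred k ih =>
      intro x n
      rw [show (-(k:ℤ) - 1) = (-(k:ℤ)) - 1 from rfl, zpow_sub_one,
        Equiv.Perm.mul_apply, ih (Tp⁻¹ x) n]
      show x (n + -(k : ℤ) - 1) = x (n + (-(k : ℤ) - 1))
      congr 1; ring


-- ulim machinery
def UF : Ultrafilter ℕ := Ultrafilter.of atTop

lemma UF_le : (UF : Filter ℕ) ≤ atTop := Ultrafilter.of_le _

open Classical in
def ulim (f : ℕ → ℝ) : ℝ :=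
  if h : ∃ x, Tendsto f (UF : Filter ℕ) (nhds x) then h.choose else 0

lemma ulim_tendsto {f : ℕ → ℝ} (hf : ∀ k, f k ∈ Icc (0:ℝ) 1) :
    Tendsto f (UF : Filter ℕ) (nhds (ulim f)) := by
  have hmem : Set.Icc (0:ℝ) 1 ∈ UF.map f := by
    rw [Ultrafilter.mem_map]
    have : f ⁻¹' (Icc (0:ℝ) 1) = univ := eq_univ_of_forall hf
    rw [this]; exact Filter.univ_mem
  obtain ⟨x, -, hx⟩ := (isCompact_Icc (a := (0:ℝ)) (b := 1)).ultrafilter_le_nhds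
    (UF.map f) (le_principal_iff.mpr hmem)
  have hx' : Filter.map f (UF : Filter ℕ) ≤ nhds x := by
    rwa [← Ultrafilter.coe_map]
  have hex : ∃ x, Tendsto f (UF : Filter ℕ) (nhds x) := ⟨x, hx'⟩
  rw [ulim, dif_pos hex]
  exact hex.choose_spec

lemma ulim_mem {f : ℕ → ℝ} (hf : ∀ k, f k ∈ Icc (0:ℝ) 1) : ulim f ∈ Icc (0:ℝ) 1 :=
  isClosed_Icc.mem_of_tendsto (ulim_tendsto hf) (Eventually.of_forall hf)

lemma ulim_eq {f : ℕ → ℝ} {a : ℝ} (hf : ∀ k, f k ∈ Icc (0:ℝ) 1)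
    (ha : Tendsto f (UF : Filter ℕ) (nhds a)) : ulim f = a :=
  tendsto_nhds_unique (ulim_tendsto hf) ha


-- the orbit point and counting
open Classical in
def om : XX := fun n => if n ∈ E then true else false

lemma om_iff (n : ℤ) : om E n = true ↔ n ∈ E := by
  classical
  by_cases h : n ∈ E <;> simp [om, h]

def orb (j : ℤ) : XX := (Tp ^ j) (om E)

lemma orb_iff (j n : ℤ) : orb E j n = true ↔ (n + j) ∈ E := by
  rw [orb, Tp_zpow, om_iff]

def Ik (k : ℕ) : Set ℤ := Set.Ico (ak E k) (ak E k + (Nk E k : ℤ))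

def cset (k : ℕ) (S : Set XX) : Set ℤ := {j ∈ Ik E k | orb E j ∈ S}

lemma cset_finite (k : ℕ) (S : Set XX) : (cset E k S).Finite :=
  (Set.finite_Ico _ _).subset (Set.sep_subset _ _)

lemma cset_ncard_le (k : ℕ) (S : Set XX) : (cset E k S).ncard ≤ Nk E k := by
  calc (cset E k S).ncard ≤ (Ik E k).ncard :=
        Set.ncard_le_ncard (Set.sep_subset _ _) (Set.finite_Ico _ _)
    _ = Nk E k := ncard_Ico _ _

def cnt (k : ℕ) (S : Set XX) : ℝ := ((cset E k S).ncard : ℝ) / (Nk E k)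

lemma Nk_cast_pos (k : ℕ) : (0:ℝ) < (Nk E k : ℝ) := by exact_mod_cast Nk_pos E k

lemma cnt_mem (k : ℕ) (S : Set XX) : cnt E k S ∈ Icc (0:ℝ) 1 := by
  constructor
  · exact div_nonneg (Nat.cast_nonneg _) (Nat.cast_nonneg _)
  · rw [cnt, div_le_one (Nk_cast_pos E k)]
    exact_mod_cast cset_ncard_le E k S

lemma cnt_mono (k : ℕ) {S T : Set XX} (h : S ⊆ T) : cnt E k S ≤ cnt E k T := by
  rw [cnt, cnt, div_le_div_iff_of_pos_right (Nk_cast_pos E k)]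
  have : cset E k S ⊆ cset E k T := fun j hj => ⟨hj.1, h hj.2⟩
  exact_mod_cast Set.ncard_le_ncard this (cset_finite E k T)

lemma cnt_union (k : ℕ) {S T : Set XX} (h : Disjoint S T) :
    cnt E k (S ∪ T) = cnt E k S + cnt E k T := by
  have hs : cset E k (S ∪ T) = cset E k S ∪ cset E k T := by
    ext j; simp only [cset, Set.mem_sep_iff, Set.mem_union]; tauto
  have hd : Disjoint (cset E k S) (cset E k T) := by
    rw [Set.disjoint_left]
    rintro j ⟨-, hjS⟩ ⟨-, hjT⟩
    exact Set.disjoint_left.mp h hjS hjT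
  rw [cnt, hs, Set.ncard_union_eq hd (cset_finite E k S) (cset_finite E k T)]
  push_cast
  rw [add_div]
  rfl

lemma cnt_union_le (k : ℕ) (S T : Set XX) :
    cnt E k (S ∪ T) ≤ cnt E k S + cnt E k T := by
  rw [cnt, cnt, cnt, ← add_div, div_le_div_iff_of_pos_right (Nk_cast_pos E k)]
  have hs : cset E k (S ∪ T) ⊆ cset E k S ∪ cset E k T := by
    rintro j ⟨hj, hmem⟩
    rcases hmem with h | h
    · exact Or.inl ⟨hj, h⟩
    · exact Or.inr ⟨hj, h⟩
  calc ((cset E k (S ∪ T)).ncard : ℝ)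
      ≤ ((cset E k S ∪ cset E k T).ncard : ℝ) := by
        exact_mod_cast Set.ncard_le_ncard hs ((cset_finite E k S).union (cset_finite E k T))
    _ ≤ ((cset E k S).ncard : ℝ) + (cset E k T).ncard := by
        exact_mod_cast Set.ncard_union_le _ _

lemma cnt_univ (k : ℕ) : cnt E k univ = 1 := by
  have : cset E k univ = Ik E k := by ext j; simp [cset]
  rw [cnt, this, Ik, ncard_Ico, div_self (ne_of_gt (Nk_cast_pos E k))]

def SA : Set XX := {x : XX | x 0 = true}

lemma cnt_SA (k : ℕ) : cnt E k (SA) = tA E (Nk E k) (ak E k) := by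
  have : cset E k SA = E ∩ Set.Ico (ak E k) (ak E k + (Nk E k : ℤ)) := by
    ext j
    simp only [cset, SA, Set.mem_sep_iff, Set.mem_setOf_eq, Set.mem_inter_iff, orb_iff,
      zero_add, Ik]
    tauto
  rw [cnt, this]; rfl

def SB (n : ℤ) : Set XX := {x : XX | x (-n) = true}

lemma cnt_SAB (n : ℤ) (k : ℕ) :
    cnt E k (SA ∩ SB n) = tA (E ∩ (fun x => x + n) '' E) (Nk E k) (ak E k) := by
  have : cset E k (SA ∩ SB n)
      = (E ∩ (fun x => x + n) '' E) ∩ Set.Ico (ak E k) (ak E k + (Nk E k : ℤ)) := by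
    ext j
    simp only [cset, SA, SB, Set.mem_sep_iff, Set.mem_inter_iff, Set.mem_setOf_eq, orb_iff,
      zero_add, Ik, Set.mem_image]
    constructor
    · rintro ⟨hj, hE, hEn⟩
      exact ⟨⟨hE, ⟨-n + j, hEn, by ring⟩⟩, hj⟩
    · rintro ⟨⟨hE, ⟨y, hy, rfl⟩⟩, hj⟩
      exact ⟨hj, hE, by simpa using hy⟩
  rw [cnt, this]; rfl

lemma cnt_SAB_empty (n : ℤ) (k : ℕ)
    (h : ∀ x ∈ E, ∀ y ∈ E, n ≠ x - y) : cnt E k (SA ∩ SB n) = 0 := by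
  have : cset E k (SA ∩ SB n) = ∅ := by
    ext j
    simp only [cset, SA, SB, Set.mem_sep_iff, Set.mem_inter_iff, Set.mem_setOf_eq, orb_iff,
      zero_add, Set.mem_empty_iff_false, iff_false]
    rintro ⟨-, hE, hEn⟩
    exact h j hE (-n + j) hEn (by ring)
  rw [cnt, this]
  simp

-- shift invariance (approximate)
lemma shift_symm_apply (x : XX) (n : ℤ) : shift.symm x n = x (n - 1) := rfl

lemma orb_shift_symm (j : ℤ) : shift.symm (orb E j) = orb E (j - 1) := by
  funext n
  rw [shift_symm_apply, orb, orb, Tp_zpow, Tp_zpow]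
  congr 1; ring

lemma mem_image_shift {S : Set XX} {x : XX} : x ∈ (⇑shift) '' S ↔ shift.symm x ∈ S := by
  constructor
  · rintro ⟨y, hy, rfl⟩
    simpa using hy
  · intro h
    exact ⟨shift.symm x, h, shift.apply_symm_apply x⟩

lemma cnt_shift_close (k : ℕ) (S : Set XX) :
    |cnt E k ((⇑shift) '' S) - cnt E k S| ≤ 1 / (Nk E k : ℝ) := by
  set a := ak E k with ha
  set N := (Nk E k : ℤ) with hN
  set D : Set ℤ := {i ∈ Set.Ico (a - 1) (a + N - 1) | orb E i ∈ S} with hD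
  have hDfin : D.Finite := (Set.finite_Ico _ _).subset (Set.sep_subset _ _)
  set C : Set ℤ := cset E k S with hC
  have hCfin : C.Finite := cset_finite E k S
  have himg : cset E k ((⇑shift) '' S) = (fun i => i + 1) '' D := by
    ext j
    simp only [cset, Set.mem_sep_iff, Set.mem_setOf_eq, Set.mem_Ico, Ik]
    rw [mem_image_shift, orb_shift_symm]
    simp only [hD, Set.mem_image, Set.mem_sep_iff, Set.mem_Ico]
    constructor
    · rintro ⟨hj, hS⟩
      exact ⟨j - 1, ⟨⟨by omega, by omega⟩, hS⟩, by ring⟩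
    · rintro ⟨i, ⟨⟨h1, h2⟩, hS⟩, rfl⟩
      refine ⟨⟨by omega, by omega⟩, by simpa using hS⟩
  have hcard : (cset E k ((⇑shift) '' S)).ncard = D.ncard := by
    rw [himg]
    exact Set.ncard_image_of_injective _ (add_left_injective 1)
  have hsub1 : D ⊆ C ∪ {a - 1} := by
    rintro i ⟨⟨h1, h2⟩, hS⟩
    rcases eq_or_ne i (a - 1) with rfl | hne
    · exact Or.inr rfl
    · exact Or.inl ⟨⟨by omega, by omega⟩, hS⟩
  have hsub2 : C ⊆ D ∪ {a + N - 1} := by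
    rintro i ⟨hi, hS⟩
    have h1 : a ≤ i := hi.1
    have h2 : i < a + N := hi.2
    rcases eq_or_ne i (a + N - 1) with rfl | hne
    · exact Or.inr rfl
    · exact Or.inl ⟨⟨by omega, by omega⟩, hS⟩
  have h1 : D.ncard ≤ C.ncard + 1 := by
    calc D.ncard ≤ (C ∪ {a - 1}).ncard :=
          Set.ncard_le_ncard hsub1 (hCfin.union (Set.finite_singleton _))
      _ ≤ C.ncard + ({a - 1} : Set ℤ).ncard := Set.ncard_union_le _ _
      _ = C.ncard + 1 := by rw [Set.ncard_singleton]
  have h2 : C.ncard ≤ D.ncard + 1 := by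
    calc C.ncard ≤ (D ∪ {a + N - 1}).ncard :=
          Set.ncard_le_ncard hsub2 (hDfin.union (Set.finite_singleton _))
      _ ≤ D.ncard + ({a + N - 1} : Set ℤ).ncard := Set.ncard_union_le _ _
      _ = D.ncard + 1 := by rw [Set.ncard_singleton]
  rw [cnt, cnt, hcard, div_sub_div_same, abs_div, abs_of_pos (Nk_cast_pos E k),
    div_le_div_iff_of_pos_right (Nk_cast_pos E k)]
  rw [abs_le]
  constructor
  · have : (C.ncard : ℝ) ≤ D.ncard + 1 := by exact_mod_cast h2
    linarith
  · have : (D.ncard : ℝ) ≤ C.ncard + 1 := by exact_mod_cast h1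
    linarith

-- the content
def Ct : Content XX where
  toFun K := ⟨ulim (fun k => cnt E k K), (ulim_mem (fun k => cnt_mem E k K)).1⟩
  mono' K₁ K₂ h := by
    have h1 := le_of_tendsto_of_tendsto' (ulim_tendsto (fun k => cnt_mem E k K₁))
      (ulim_tendsto (fun k => cnt_mem E k K₂)) (fun k => cnt_mono E k h)
    exact h1
  sup_disjoint' K₁ K₂ hd _ _ := by
    have hadd : ∀ k, cnt E k ((K₁ ⊔ K₂ : TopologicalSpace.Compacts XX) : Set XX)
        = cnt E k K₁ + cnt E k K₂ := fun k => by
      have hh : ((K₁ ⊔ K₂ : TopologicalSpace.Compacts XX) : Set XX) = ↑K₁ ∪ ↑K₂ := rfl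
      rw [hh, cnt_union E k hd]
    apply NNReal.eq
    have ht : Tendsto (fun k => cnt E k ((K₁ ⊔ K₂ : TopologicalSpace.Compacts XX) : Set XX))
        (UF : Filter ℕ) (nhds (ulim (fun k => cnt E k K₁) + ulim (fun k => cnt E k K₂))) := by
      have := (ulim_tendsto (fun k => cnt_mem E k K₁)).add
        (ulim_tendsto (fun k => cnt_mem E k K₂))
      refine this.congr fun k => (hadd k).symm
    exact ulim_eq (fun k => cnt_mem E k _) ht
  sup_le' K₁ K₂ := by
    have hle : ∀ k, cnt E k ((K₁ ⊔ K₂ : TopologicalSpace.Compacts XX) : Set XX)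
        ≤ cnt E k K₁ + cnt E k K₂ := fun k => cnt_union_le E k _ _
    have h1 := le_of_tendsto_of_tendsto' (ulim_tendsto (fun k => cnt_mem E k _))
      ((ulim_tendsto (fun k => cnt_mem E k K₁)).add
        (ulim_tendsto (fun k => cnt_mem E k K₂))) hle
    exact h1

lemma Ct_apply (K : TopologicalSpace.Compacts XX) :
    ((Ct E).toFun K : ℝ) = ulim (fun k => cnt E k K) := rfl

def mu : Measure XX := (Ct E).measure

lemma mu_clopen {S : Set XX} (hC : IsCompact S) (hO : IsOpen S) :
    mu E S = ((Ct E).toFun ⟨S, hC⟩ : ℝ≥0∞) := by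
  rw [mu, Content.measure_apply _ hO.measurableSet]
  have h1 : (Ct E).outerMeasure S = (Ct E).innerContent ⟨S, hO⟩ :=
    Content.outerMeasure_opens _ ⟨S, hO⟩
  rw [h1, Content.innerContent_of_isCompact _ hC hO]
  rfl

-- shift invariance of the content
lemma Ct_shift (K : TopologicalSpace.Compacts XX) :
    (((Ct E).toFun (K.map ⇑shift shift.continuous) : ℝ≥0) : ℝ≥0∞)
      = ((Ct E).toFun K : ℝ≥0∞) := by
  rw [ENNReal.coe_inj]
  apply NNReal.eq
  have hcar : ((K.map ⇑shift shift.continuous : TopologicalSpace.Compacts XX) : Set XX)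
      = ⇑shift '' (K : Set XX) := rfl
  rw [Ct_apply, Ct_apply, hcar]
  set f1 := fun k => cnt E k (⇑shift '' (K : Set XX)) with hf1
  set f2 := fun k => cnt E k (K : Set XX) with hf2
  have t1 := ulim_tendsto (f := f1) (fun k => cnt_mem E k _)
  have t2 := ulim_tendsto (f := f2) (fun k => cnt_mem E k _)
  have hdiff : Tendsto (fun k => f1 k - f2 k) (UF : Filter ℕ)
      (nhds (ulim f1 - ulim f2)) := t1.sub t2
  have hN : Tendsto (fun k : ℕ => 1 / (Nk E k : ℝ)) atTop (nhds 0) := by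
    apply squeeze_zero (fun k => by positivity) (g := fun k : ℕ => 1 / ((k : ℝ) + 1))
    · intro k
      apply one_div_le_one_div_of_le (by positivity)
      exact_mod_cast Nk_ge E k
    · exact tendsto_one_div_add_atTop_nhds_zero_nat
  have h0 : Tendsto (fun k => f1 k - f2 k) atTop (nhds 0) := by
    apply squeeze_zero_norm (fun k => ?_) hN
    simpa [Real.norm_eq_abs] using cnt_shift_close E k (K : Set XX)
  have := tendsto_nhds_unique hdiff (h0.mono_left UF_le)
  linarith

lemma Tp_coe : ⇑Tp = ⇑shift := rfl

lemma Tp_measurable : Measurable ⇑Tp := shift.continuous.measurable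

lemma Tp_symm_measurable : Measurable ⇑Tp.symm := shift.symm.continuous.measurable

lemma mu_preserving : MeasurePreserving ⇑Tp (mu E) (mu E) := by
  refine ⟨Tp_measurable, ?_⟩
  ext s hs
  rw [Measure.map_apply Tp_measurable hs, mu, Content.measure_apply _ (Tp_measurable hs),
    Content.measure_apply _ hs]
  exact Content.outerMeasure_preimage (Ct E) shift (fun K => Ct_shift E K) s

lemma mu_univ : mu E univ = 1 := by
  rw [mu_clopen E isCompact_univ isOpen_univ]
  have h1 : ulim (fun k => cnt E k ((⟨univ, isCompact_univ⟩ :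
      TopologicalSpace.Compacts XX) : Set XX)) = 1 := by
    apply ulim_eq (fun k => cnt_mem E k _)
    have : (fun k => cnt E k ((⟨univ, isCompact_univ⟩ :
        TopologicalSpace.Compacts XX) : Set XX)) = fun _ => (1:ℝ) :=
      funext fun k => cnt_univ E k
    rw [this]
    exact tendsto_const_nhds
  rw [show ((1:ℝ≥0∞)) = ((1 : ℝ≥0) : ℝ≥0∞) from rfl, ENNReal.coe_inj]
  exact NNReal.eq h1

-- topological facts
lemma SA_isOpen : IsOpen SA := by
  have h : Continuous (fun x : XX => x (0:ℤ)) := continuous_apply (0:ℤ)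
  exact (isOpen_discrete ({true} : Set Bool)).preimage h

lemma SA_isClosed : IsClosed SA := by
  have h : Continuous (fun x : XX => x (0:ℤ)) := continuous_apply (0:ℤ)
  exact (isClosed_discrete ({true} : Set Bool)).preimage h

lemma SB_isOpen (n : ℤ) : IsOpen (SB n) := by
  have h : Continuous (fun x : XX => x (-n)) := continuous_apply (-n)
  exact (isOpen_discrete ({true} : Set Bool)).preimage h

lemma SB_isClosed (n : ℤ) : IsClosed (SB n) := by
  have h : Continuous (fun x : XX => x (-n)) := continuous_apply (-n)
  exact (isClosed_discrete ({true} : Set Bool)).preimage h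

lemma img_Tpow (n : ℤ) : ⇑(Tp ^ n) '' SA = SB n := by
  rw [Equiv.image_eq_preimage_symm]
  ext x
  have hsymm : (Tp ^ n).symm = Tp ^ (-n) := by
    rw [← Equiv.Perm.inv_def, ← zpow_neg]
  simp only [Set.mem_preimage, SA, SB, Set.mem_setOf_eq, hsymm, Tp_zpow, zero_add]

-- limit value lemmas
lemma ulim_tA_le (F : Set ℤ) :
    ulim (fun k => tA F (Nk E k) (ak E k)) ≤ upperBanachDensity F := by
  have hg : ∀ k, tA F (Nk E k) (ak E k) ∈ Icc (0:ℝ) 1 :=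
    fun k => ⟨tA_nonneg _ _ _, tA_le_one _ _ _⟩
  refine le_of_forall_pos_le_add fun ε hε => ?_
  have h1 : limsup (sN F) atTop < upperBanachDensity F + ε := by
    rw [← ubd_eq]; linarith
  have h2 := eventually_lt_of_limsup_lt h1 (sN_bddAbove F)
  rw [eventually_atTop] at h2
  obtain ⟨M, hM⟩ := h2
  have h3 : ∀ᶠ k in (atTop : Filter ℕ), tA F (Nk E k) (ak E k)
      ≤ upperBanachDensity F + ε := by
    rw [eventually_atTop]
    refine ⟨M, fun k hk => ?_⟩
    refine le_of_lt (lt_of_le_of_lt (tA_le_sN F _ _) (hM _ ?_))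
    exact le_trans (le_trans hk (Nat.le_succ k)) (Nk_ge E k)
  exact le_of_tendsto (ulim_tendsto hg) (h3.filter_mono UF_le)

lemma d_le_ulim :
    upperBanachDensity E ≤ ulim (fun k => tA E (Nk E k) (ak E k)) := by
  have hg : ∀ k, tA E (Nk E k) (ak E k) ∈ Icc (0:ℝ) 1 :=
    fun k => ⟨tA_nonneg _ _ _, tA_le_one _ _ _⟩
  have hlow : Tendsto (fun k : ℕ => upperBanachDensity E - 1 / ((k:ℝ)+1))
      (UF : Filter ℕ) (nhds (upperBanachDensity E)) := by
    have := (tendsto_const_nhds (x := upperBanachDensity E)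
      (f := (atTop : Filter ℕ))).sub tendsto_one_div_add_atTop_nhds_zero_nat
    rw [sub_zero] at this
    exact this.mono_left UF_le
  exact le_of_tendsto_of_tendsto' hlow (ulim_tendsto hg)
    (fun k => le_of_lt (ak_spec E k))

end
end FCaux

open FCaux in
/-- Furstenberg's correspondence principle: for `E ⊆ ℤ` of positive upper Banach
density there are an invertible probability measure-preserving system `(X, μ, T)`
and `A ⊆ X` with `μ(A) = d*(E)` and `d*(E ∩ (E + n)) ≥ μ(A ∩ TⁿA)` for all `n`;
in particular `R(A) ⊆ E - E`. -/
theorem furstenberg_correspondence (E : Set ℤ) (hE : 0 < upperBanachDensity E) :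
    ∃ (X : Type) (_ : MeasurableSpace X) (μ : Measure X)
      (_ : IsProbabilityMeasure μ) (T : Equiv.Perm X),
      Measurable T ∧ Measurable T.symm ∧ MeasurePreserving T μ μ ∧
      ∃ A : Set X, MeasurableSet A ∧ (μ A).toReal = upperBanachDensity E ∧
        (∀ n : ℤ,
          (μ (A ∩ ⇑(T ^ n) '' A)).toReal ≤
            upperBanachDensity (E ∩ (fun x => x + n) '' E)) ∧
        ∀ n : ℤ, 0 < μ (A ∩ ⇑(T ^ n) '' A) →
          ∃ x ∈ E, ∃ y ∈ E, n = x - y := by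
  refine ⟨XX, inferInstance, mu E, ⟨mu_univ E⟩, Tp,
    Tp_measurable, Tp_symm_measurable, mu_preserving E,
    SA, SA_isOpen.measurableSet, ?_, ?_, ?_⟩
  · rw [mu_clopen E SA_isClosed.isCompact SA_isOpen, ENNReal.coe_toReal]
    show ulim (fun k => cnt E k SA) = upperBanachDensity E
    have h : (fun k => cnt E k SA)
        = fun k => tA E (Nk E k) (ak E k) := funext (cnt_SA E)
    rw [h]
    exact le_antisymm (ulim_tA_le E E) (d_le_ulim E)
  · intro n
    rw [img_Tpow n,
      mu_clopen E ((SA_isClosed.inter (SB_isClosed n)).isCompact)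
        (SA_isOpen.inter (SB_isOpen n)), ENNReal.coe_toReal]
    show ulim (fun k => cnt E k (SA ∩ SB n)) ≤ upperBanachDensity (E ∩ (fun x => x + n) '' E)
    have h : (fun k => cnt E k (SA ∩ SB n))
        = fun k => tA (E ∩ (fun x => x + n) '' E) (Nk E k) (ak E k) :=
      funext (cnt_SAB E n)
    rw [h]
    exact ulim_tA_le E _
  · intro n hpos
    by_contra hcon
    push_neg at hcon
    rw [img_Tpow n,
      mu_clopen E ((SA_isClosed.inter (SB_isClosed n)).isCompact)
        (SA_isOpen.inter (SB_isOpen n))] at hpos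
    have h0 : ulim (fun k => cnt E k (SA ∩ SB n)) = 0 := by
      apply ulim_eq (fun k => cnt_mem E k _)
      have h : (fun k => cnt E k (SA ∩ SB n)) = fun _ => (0:ℝ) :=
        funext fun k => cnt_SAB_empty E n k hcon
      rw [h]
      exact tendsto_const_nhds
    have hz : ((Ct E).toFun ⟨SA ∩ SB n,
        (SA_isClosed.inter (SB_isClosed n)).isCompact⟩ : NNReal) = 0 := by
      apply NNReal.eq
      rw [NNReal.coe_zero]
      exact h0
    rw [hz] at hpos
    simp at hpos
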